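/- Let A be a unital norm-closed subalgebra of a unital C*-algebra (with the same unit 1), and let a ∈ A with ‖a‖ ≤ 1. Let J be the norm-closure of (1−a)A. Then J is a norm-closed right ideal of A; setting x_n = (1/n) Σ_{k=1}^{n} a^k, one has ‖x_n‖ ≤ 1, the elements e_n = 1 − x_n belong to J, and (e_n) is a left approximate identity for J (that is, e_n x → x in norm for all x ∈ J); moreover J possesses a left contractive approximate identity, so J is an r-ideal of A. -/

import Mathlib

open Filter Topology

/-- `D` has a contractive (two-sided) approximate identity: a net in the closed unit
ball of `D` with `e_t * x → x` and `x * e_t → x` for every `x ∈ D`. -/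
def HasCai {B : Type*} [NonUnitalNormedRing B] (D : Set B) : Prop :=
  ∃ (ι : Type) (_ : Preorder ι) (_ : IsDirected ι (· ≤ ·)) (_ : Nonempty ι) (e : ι → B),
    (∀ t, e t ∈ D) ∧ (∀ t, ‖e t‖ ≤ 1) ∧
    ∀ x ∈ D, Tendsto (fun t => e t * x) atTop (𝓝 x) ∧ Tendsto (fun t => x * e t) atTop (𝓝 x)

/-- `D` has a left contractive approximate identity. -/
def HasLeftCai {B : Type*} [NonUnitalNormedRing B] (D : Set B) : Prop :=
  ∃ (ι : Type) (_ : Preorder ι) (_ : IsDirected ι (· ≤ ·)) (_ : Nonempty ι) (e : ι → B),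
    (∀ t, e t ∈ D) ∧ (∀ t, ‖e t‖ ≤ 1) ∧
    ∀ x ∈ D, Tendsto (fun t => e t * x) atTop (𝓝 x)

/-- A norm-closed (non-unital) subalgebra, described as a subset. -/
def IsClosedSubalg {B : Type*} [NonUnitalNormedRing B] [Module ℂ B] (A : Set B) : Prop :=
  IsClosed A ∧ (0 : B) ∈ A ∧ (∀ x ∈ A, ∀ y ∈ A, x + y ∈ A) ∧
    (∀ (c : ℂ), ∀ x ∈ A, c • x ∈ A) ∧ ∀ x ∈ A, ∀ y ∈ A, x * y ∈ A

/-- A hereditary subalgebra of `A`: a norm-closed subalgebra `D ⊆ A` with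
`D A D ⊆ D` possessing a contractive approximate identity. -/
def IsHSA {B : Type*} [NonUnitalNormedRing B] [Module ℂ B] (A D : Set B) : Prop :=
  IsClosedSubalg D ∧ D ⊆ A ∧ (∀ d₁ ∈ D, ∀ a ∈ A, ∀ d₂ ∈ D, d₁ * a * d₂ ∈ D) ∧ HasCai D

/-- An r-ideal of `A`: a norm-closed right ideal of `A` possessing a left
contractive approximate identity. -/
def IsRIdeal {B : Type*} [NonUnitalNormedRing B] [Module ℂ B] (A J : Set B) : Prop :=
  IsClosed J ∧ J ⊆ A ∧ (0 : B) ∈ J ∧ (∀ x ∈ J, ∀ y ∈ J, x + y ∈ J) ∧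
    (∀ (c : ℂ), ∀ x ∈ J, c • x ∈ J) ∧ (∀ x ∈ J, ∀ a ∈ A, x * a ∈ J) ∧ HasLeftCai J

/-- `XY`: the norm-closure of the linear span of products `x * y`, `x ∈ X`, `y ∈ Y`. -/
def prodSet {B : Type*} [NonUnitalNormedRing B] [Module ℂ B] (X Y : Set B) : Set B :=
  closure (Submodule.span ℂ {z : B | ∃ x ∈ X, ∃ y ∈ Y, z = x * y} : Set B)

lemma aux_left_ai {B : Type*} [NonUnitalNormedRing B] (S : Set B) (e : ℕ → B) (C : ℝ)
    (hC : ∀ n, ‖e n‖ ≤ C)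
    (h : ∀ s ∈ S, Tendsto (fun n => e n * s) atTop (𝓝 s)) :
    ∀ u ∈ closure S, Tendsto (fun n => e n * u) atTop (𝓝 u) := by
  intro u hu
  rw [Metric.tendsto_atTop]
  intro ε hε
  have hC0 : 0 ≤ C := (norm_nonneg _).trans (hC 0)
  obtain ⟨s, hsS, hds⟩ := Metric.mem_closure_iff.mp hu (ε / (2 * (C + 1))) (by positivity)
  obtain ⟨N, hN⟩ := Metric.tendsto_atTop.mp (h s hsS) (ε / 2) (by positivity)
  refine ⟨N, fun n hn => ?_⟩
  have hd : dist u s < ε / (2 * (C + 1)) := hds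
  have h1 : dist (e n * u) u ≤ C * dist u s + (ε / 2 + dist u s) := by
    calc dist (e n * u) u = ‖e n * (u - s) + ((e n * s - s) + (s - u))‖ := by
          rw [dist_eq_norm]; congr 1; noncomm_ring
      _ ≤ ‖e n * (u - s)‖ + (‖e n * s - s‖ + ‖s - u‖) :=
          (norm_add_le _ _).trans (by gcongr; exact norm_add_le _ _)
      _ ≤ C * dist u s + (ε / 2 + dist u s) := by
          have b1 : ‖e n * (u - s)‖ ≤ C * dist u s := by
            calc ‖e n * (u - s)‖ ≤ ‖e n‖ * ‖u - s‖ := norm_mul_le _ _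
              _ ≤ C * ‖u - s‖ := by gcongr; exact hC n
              _ = C * dist u s := by rw [dist_eq_norm]
          have b2 : ‖e n * s - s‖ ≤ ε / 2 := by
            have := hN n hn; rw [dist_eq_norm] at this; linarith
          have b3 : ‖s - u‖ = dist u s := by rw [dist_eq_norm, norm_sub_rev]
          linarith
  have : C * dist u s + dist u s < ε / 2 := by
    have hlt : (C + 1) * dist u s < (C + 1) * (ε / (2 * (C + 1))) := by
      apply mul_lt_mul_of_pos_left hd; linarith
    have heq : (C + 1) * (ε / (2 * (C + 1))) = ε / 2 := by field_simp
    nlinarith [dist_nonneg (x := u) (y := s)]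
  linarith

lemma aux_bounds {B : Type*} [CStarAlgebra B] {a : B} (hna : ‖a‖ ≤ 1) (n : ℕ) {z : B}
    (hwz : (1 + (n : ℂ) • (1 - a)) * z = 1) :
    ‖z‖ ≤ 1 ∧ ‖1 - z‖ ≤ 1 := by
  letI := CStarAlgebra.spectralOrder B
  haveI := CStarAlgebra.spectralOrderedRing B
  set c : ℂ := (n : ℂ) with hc
  set X : B := 1 - a with hX
  set w : B := 1 + c • X with hw
  have halg : ∀ t : ℝ, 0 ≤ t → 0 ≤ algebraMap ℝ B t := by
    intro t ht
    have hsa : star (algebraMap ℝ B (Real.sqrt t)) = algebraMap ℝ B (Real.sqrt t) := by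
      rw [Algebra.algebraMap_eq_smul_one, star_smul, star_trivial, star_one]
    have : algebraMap ℝ B t =
        star (algebraMap ℝ B (Real.sqrt t)) * algebraMap ℝ B (Real.sqrt t) := by
      rw [hsa, ← map_mul, Real.mul_self_sqrt ht]
    rw [this]
    exact star_mul_self_nonneg _
  have hsa : IsSelfAdjoint (a + star a) := by
    rw [IsSelfAdjoint, star_add, star_star, add_comm]
  have hnorm2 : ‖a + star a‖ ≤ 2 := by
    calc ‖a + star a‖ ≤ ‖a‖ + ‖star a‖ := norm_add_le _ _
      _ ≤ 2 := by rw [norm_star]; linarith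
  have hXsX : 0 ≤ X + star X := by
    have hXX : X + star X = algebraMap ℝ B 2 - (a + star a) := by
      rw [hX, star_sub, star_one, map_ofNat, ← one_add_one_eq_two]; noncomm_ring
    have h1 : a + star a ≤ algebraMap ℝ B ‖a + star a‖ := hsa.le_algebraMap_norm_self
    have h2 : 0 ≤ algebraMap ℝ B (2 - ‖a + star a‖) := halg _ (by linarith)
    rw [map_sub] at h2
    rw [hXX]
    calc (0 : B) ≤ algebraMap ℝ B 2 - algebraMap ℝ B ‖a + star a‖ := h2
      _ ≤ algebraMap ℝ B 2 - (a + star a) := sub_le_sub_left h1 _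
  have hstarw : star w = 1 + c • star X := by
    rw [hw, star_add, star_one, star_smul, hc, star_natCast]
  have hsww : star w * w = 1 + (c • (X + star X) + (c * c) • (star X * X)) := by
    rw [hstarw, hw]
    simp only [mul_add, add_mul, mul_one, one_mul, smul_mul_smul_comm, smul_add]
    abel
  have hp0 : 0 ≤ c • (X + star X) := by
    rw [hc, Nat.cast_smul_eq_nsmul]
    exact nsmul_nonneg hXsX n
  have hq0 : 0 ≤ (c * c) • (star X * X) := by
    have : c * c = ((n * n : ℕ) : ℂ) := by rw [hc]; push_cast; ring
    rw [this, Nat.cast_smul_eq_nsmul]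
    exact nsmul_nonneg (star_mul_self_nonneg X) _
  have h01 : (0 : B) ≤ 1 := by simpa using star_mul_self_nonneg (1 : B)
  have h1w : (1 : B) ≤ star w * w := by
    rw [hsww]
    exact le_add_of_nonneg_right (add_nonneg hp0 hq0)
  have hqw : (c * c) • (star X * X) ≤ star w * w := by
    rw [hsww]
    calc (c * c) • (star X * X) ≤ 1 + c • (X + star X) + (c * c) • (star X * X) :=
          le_add_of_nonneg_left (add_nonneg h01 hp0)
      _ = 1 + (c • (X + star X) + (c * c) • (star X * X)) := by abel
  have normbound : ∀ v q : B, 0 ≤ q → q ≤ star w * w → star v * v = star z * q * z →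
      ‖v‖ ≤ 1 := by
    intro v q hq hqle hv
    have key : star v * v ≤ 1 := by
      rw [hv]
      calc star z * q * z ≤ star z * (star w * w) * z := star_left_conjugate_le_conjugate hqle z
        _ = star (w * z) * (w * z) := by simp [star_mul, mul_assoc]
        _ = 1 := by rw [hwz]; simp
    have h0 : 0 ≤ star v * v := star_mul_self_nonneg v
    have hnn := CStarAlgebra.norm_le_norm_of_nonneg_of_le h0 key
    have h1n : ‖(1 : B)‖ ≤ 1 := by
      have h := CStarRing.norm_star_mul_self (x := (1 : B))
      rw [star_one, one_mul] at h
      nlinarith [norm_nonneg (1 : B)]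
    rw [CStarRing.norm_star_mul_self] at hnn
    nlinarith [norm_nonneg v]
  constructor
  · exact normbound z 1 h01 h1w (by rw [mul_one])
  · have he_eq : 1 - z = (c • X) * z := by
      have h := hwz
      rw [hw, add_mul, one_mul] at h
      exact (eq_sub_of_add_eq' h).symm
    refine normbound (1 - z) ((c * c) • (star X * X)) hq0 hqw ?_
    rw [he_eq, star_mul, star_smul]
    have hcc : star c = c := by rw [hc, star_natCast]
    rw [hcc]
    simp only [mul_assoc, smul_mul_assoc, mul_smul_comm, smul_smul]

theorem singly_generated_rIdeal {B : Type*} [CStarAlgebra B]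
    (A : Set B) (hA : IsClosedSubalg A) (h1A : (1 : B) ∈ A)
    (a : B) (haA : a ∈ A) (hna : ‖a‖ ≤ 1)
    (J : Set B) (hJ : J = closure {y : B | ∃ x ∈ A, y = (1 - a) * x})
    (x : ℕ → B) (hx : ∀ n : ℕ, x n = ((n : ℂ)⁻¹) • ∑ k ∈ Finset.Icc 1 n, a ^ k) :
    IsClosed J ∧ J ⊆ A ∧ (0 : B) ∈ J ∧
      (∀ u ∈ J, ∀ v ∈ J, u + v ∈ J) ∧ (∀ (c : ℂ), ∀ u ∈ J, c • u ∈ J) ∧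
      (∀ u ∈ J, ∀ v ∈ A, u * v ∈ J) ∧
      (∀ n : ℕ, ‖x n‖ ≤ 1) ∧ (∀ n : ℕ, 1 ≤ n → 1 - x n ∈ J) ∧
      (∀ u ∈ J, Tendsto (fun n : ℕ => (1 - x n) * u) atTop (𝓝 u)) ∧
      HasLeftCai J := by
  obtain ⟨hAc, hA0, hAadd, hAsmul, hAmul⟩ := hA
  set S : Set B := {y : B | ∃ x ∈ A, y = (1 - a) * x} with hS
  -- basic membership facts
  have hnegA : ∀ y ∈ A, -y ∈ A := fun y hy => by
    simpa [neg_smul, one_smul] using hAsmul (-1) y hy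
  have h1aA : (1 : B) - a ∈ A := by
    simpa [sub_eq_add_neg] using hAadd 1 h1A (-a) (hnegA a haA)
  have hpowA : ∀ k : ℕ, a ^ k ∈ A := by
    intro k
    induction k with
    | zero => simpa using h1A
    | succ m ih => rw [pow_succ]; exact hAmul _ ih _ haA
  have hsumA : ∀ (s : Finset ℕ) (f : ℕ → B), (∀ i ∈ s, f i ∈ A) → (∑ i ∈ s, f i) ∈ A := by
    intro s f hf
    exact Finset.sum_induction f (· ∈ A) (fun p q hp hq => hAadd p hp q hq)
      hA0 hf
  have hSA : S ⊆ A := by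
    rintro y ⟨v, hvA, rfl⟩
    exact hAmul _ h1aA _ hvA
  have hS0 : (0 : B) ∈ S := ⟨0, hA0, by rw [mul_zero]⟩
  have hSadd : ∀ u ∈ S, ∀ v ∈ S, u + v ∈ S := by
    rintro u ⟨p, hp, rfl⟩ v ⟨q, hq, rfl⟩
    exact ⟨p + q, hAadd p hp q hq, by rw [mul_add]⟩
  have hSsmul : ∀ (c : ℂ), ∀ u ∈ S, c • u ∈ S := by
    rintro c u ⟨p, hp, rfl⟩
    exact ⟨c • p, hAsmul c p hp, (mul_smul_comm c _ p).symm⟩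
  subst hJ
  -- key norm bound for x n * (1 - a)
  have hxkey : ∀ n : ℕ, 1 ≤ n → ‖x n * (1 - a)‖ ≤ 2 / n := by
    intro n hn
    have hnR : (0 : ℝ) < n := by exact_mod_cast hn
    have htel : (∑ k ∈ Finset.Icc 1 n, a ^ k) * (1 - a) = a - a ^ (n + 1) := by
      rw [Finset.sum_mul]
      have hsummand : ∀ k, a ^ k * (1 - a) = a ^ k - a ^ (k + 1) := by
        intro k; rw [mul_sub, mul_one, pow_succ]
      calc ∑ k ∈ Finset.Icc 1 n, a ^ k * (1 - a)
          = ∑ k ∈ Finset.Icc 1 n, (a ^ k - a ^ (k + 1)) :=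
            Finset.sum_congr rfl fun k _ => hsummand k
        _ = ∑ i ∈ Finset.range n, (a ^ (i + 1) - a ^ (i + 1 + 1)) := by
            rw [← Finset.Ico_add_one_right_eq_Icc, Finset.sum_Ico_eq_sum_range]
            refine Finset.sum_congr (by norm_num) fun i _ => by rw [add_comm 1 i]
        _ = a ^ (0 + 1) - a ^ (n + 1) := Finset.sum_range_sub' (fun i => a ^ (i + 1)) n
        _ = a - a ^ (n + 1) := by rw [zero_add, pow_one]
    rw [hx n, smul_mul_assoc, htel, norm_smul]
    have h1 : ‖a - a ^ (n + 1)‖ ≤ 2 := by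
      calc ‖a - a ^ (n + 1)‖ ≤ ‖a‖ + ‖a ^ (n + 1)‖ := norm_sub_le _ _
        _ ≤ 1 + 1 := by
            gcongr
            calc ‖a ^ (n + 1)‖ ≤ ‖a‖ ^ (n + 1) := norm_pow_le' a (Nat.succ_pos n)
              _ ≤ 1 := pow_le_one₀ (norm_nonneg a) hna
        _ = 2 := by norm_num
    have h2 : ‖((n : ℂ))⁻¹‖ = (n : ℝ)⁻¹ := by
      rw [norm_inv]; norm_num
    rw [h2]
    rw [div_eq_inv_mul]
    have : (0:ℝ) ≤ (n : ℝ)⁻¹ := by positivity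
    exact mul_le_mul_of_nonneg_left h1 this
  have h1n : ‖(1 : B)‖ ≤ 1 := by
    have h := CStarRing.norm_star_mul_self (x := (1 : B))
    rw [star_one, one_mul] at h
    nlinarith [norm_nonneg (1 : B)]
  have hcard : ∀ n : ℕ, (Finset.Icc 1 n).card = n := by
    intro n; rw [Nat.card_Icc]; omega
  -- norm bound for x n
  have hxnorm : ∀ n : ℕ, ‖x n‖ ≤ 1 := by
    intro n
    rcases Nat.eq_zero_or_pos n with h0 | hpos
    · rw [hx, h0]; simp
    · rw [hx n, norm_smul]
      have hsum_le : ‖∑ k ∈ Finset.Icc 1 n, a ^ k‖ ≤ (n : ℝ) := by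
        calc ‖∑ k ∈ Finset.Icc 1 n, a ^ k‖ ≤ ∑ k ∈ Finset.Icc 1 n, ‖a ^ k‖ :=
              norm_sum_le _ _
          _ ≤ ∑ _k ∈ Finset.Icc 1 n, (1 : ℝ) := by
              refine Finset.sum_le_sum fun k hk => ?_
              have hk1 : 0 < k := (Finset.mem_Icc.mp hk).1
              calc ‖a ^ k‖ ≤ ‖a‖ ^ k := norm_pow_le' a hk1
                _ ≤ 1 := pow_le_one₀ (norm_nonneg a) hna
          _ = (n : ℝ) := by rw [Finset.sum_const, hcard n, nsmul_eq_mul, mul_one]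
      have h2 : ‖((n : ℂ))⁻¹‖ = (n : ℝ)⁻¹ := by rw [norm_inv]; norm_num
      have hnR : (0 : ℝ) < n := by exact_mod_cast hpos
      rw [h2]
      calc (n : ℝ)⁻¹ * ‖∑ k ∈ Finset.Icc 1 n, a ^ k‖ ≤ (n : ℝ)⁻¹ * n := by gcongr
        _ = 1 := inv_mul_cancel₀ (ne_of_gt hnR)
  -- membership of 1 - x n in J
  have hmemJ : ∀ n : ℕ, 1 ≤ n → 1 - x n ∈ closure S := by
    intro n hn
    have hnC : ((n : ℂ)) ≠ 0 := Nat.cast_ne_zero.mpr (by omega)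
    set g : ℕ → B := fun k => ∑ j ∈ Finset.range k, a ^ j with hg
    have hgA : ∀ k, g k ∈ A := fun k => hsumA _ _ fun j _ => hpowA j
    have hmain : 1 - x n = (1 - a) * ((n : ℂ)⁻¹ • ∑ k ∈ Finset.Icc 1 n, g k) := by
      rw [hx n, mul_smul_comm, Finset.mul_sum]
      have hpg : ∀ k ∈ Finset.Icc 1 n, (1 - a) * g k = 1 - a ^ k :=
        fun k _ => mul_neg_geom_sum a k
      rw [Finset.sum_congr rfl hpg, Finset.sum_sub_distrib, smul_sub, Finset.sum_const,
        hcard n, ← Nat.cast_smul_eq_nsmul ℂ, smul_smul, inv_mul_cancel₀ hnC, one_smul]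
    exact subset_closure ⟨_, hAsmul _ _ (hsumA _ _ fun k _ => hgA k), hmain⟩
  -- left approximate identity property of (1 - x n)
  have hSconv : ∀ s ∈ S, Tendsto (fun n : ℕ => (1 - x n) * s) atTop (𝓝 s) := by
    rintro s ⟨v, hvA, rfl⟩
    rw [← tendsto_sub_nhds_zero_iff]
    apply squeeze_zero_norm' ?_ (tendsto_const_div_atTop_nhds_zero_nat (2 * ‖v‖))
    · filter_upwards [eventually_ge_atTop 1] with n hn
      have heq : (1 - x n) * ((1 - a) * v) - (1 - a) * v = -(x n * (1 - a) * v) := by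
        noncomm_ring
      rw [heq, norm_neg]
      calc ‖x n * (1 - a) * v‖ ≤ ‖x n * (1 - a)‖ * ‖v‖ := norm_mul_le _ _
        _ ≤ (2 / n) * ‖v‖ := mul_le_mul_of_nonneg_right (hxkey n hn) (norm_nonneg v)
        _ = 2 * ‖v‖ / n := by ring
  have hconv1 : ∀ u ∈ closure S, Tendsto (fun n : ℕ => (1 - x n) * u) atTop (𝓝 u) := by
    apply aux_left_ai S (fun n => 1 - x n) 2 ?_ hSconv
    intro n
    calc ‖(1 : B) - x n‖ ≤ ‖(1 : B)‖ + ‖x n‖ := norm_sub_le _ _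
      _ ≤ 1 + 1 := add_le_add h1n (hxnorm n)
      _ = 2 := by norm_num
  -- construction of the contractive approximate identity
  have hconstruct : ∀ n : ℕ, ∃ z : B, z ∈ A ∧ (1 + (n : ℂ) • (1 - a)) * z = 1 ∧
      z * (1 + (n : ℂ) • (1 - a)) = 1 := by
    intro n
    have hn1 : ((n : ℂ) + 1) ≠ 0 := by
      have h : ((n : ℂ) + 1) = ((n + 1 : ℕ) : ℂ) := by push_cast; ring
      rw [h]
      exact_mod_cast Nat.succ_ne_zero n
    set d : ℂ := (n : ℂ) / ((n : ℂ) + 1) with hd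
    set b : B := d • a with hb
    have hdn : ‖d‖ < 1 := by
      rw [hd, norm_div]
      have h1 : ‖((n : ℂ))‖ = (n : ℝ) := by norm_num
      have h2 : ‖((n : ℂ) + 1)‖ = (n : ℝ) + 1 := by
        have h : ((n : ℂ) + 1) = ((n + 1 : ℕ) : ℂ) := by push_cast; ring
        rw [h, Complex.norm_natCast]
        push_cast; ring
      rw [h1, h2, div_lt_one (by positivity)]
      linarith
    have hbn : ‖b‖ < 1 := by
      rw [hb, norm_smul]
      calc ‖d‖ * ‖a‖ ≤ ‖d‖ * 1 := by gcongr
        _ < 1 := by rw [mul_one]; exact hdn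
    have h1t : (1 - b) * ∑' i : ℕ, b ^ i = 1 := mul_neg_geom_series b hbn
    have ht1 : (∑' i : ℕ, b ^ i) * (1 - b) = 1 := geom_series_mul_neg b hbn
    have htA : (∑' i : ℕ, b ^ i) ∈ A := by
      apply hAc.mem_of_tendsto (summable_geometric_of_norm_lt_one hbn).hasSum.tendsto_sum_nat
      filter_upwards with m
      refine hsumA _ _ fun k _ => ?_
      rw [hb, smul_pow]
      exact hAsmul _ _ (hpowA k)
    have hwd : (1 + (n : ℂ) • ((1 : B) - a)) = ((n : ℂ) + 1) • ((1 : B) - b) := by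
      have hn1' : ((n : ℂ) + 1) * ((n : ℂ) / ((n : ℂ) + 1)) = (n : ℂ) := by field_simp
      rw [hb, hd]
      match_scalars
      · ring
      · field_simp
    refine ⟨((n : ℂ) + 1)⁻¹ • ∑' i : ℕ, b ^ i, hAsmul _ _ htA, ?_, ?_⟩
    · rw [hwd, smul_mul_smul_comm, mul_inv_cancel₀ hn1, one_smul, h1t]
    · rw [hwd, smul_mul_smul_comm, inv_mul_cancel₀ hn1, one_smul, ht1]
  choose z hzA hwz hzw using hconstruct
  have hbounds : ∀ n : ℕ, ‖z n‖ ≤ 1 ∧ ‖1 - z n‖ ≤ 1 := fun n => aux_bounds hna n (hwz n)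
  have hee : ∀ n : ℕ, 1 - z n = (1 - a) * ((n : ℂ) • z n) := by
    intro n
    have h := hwz n
    rw [add_mul, one_mul, smul_mul_assoc] at h
    rw [mul_smul_comm]
    exact (eq_sub_of_add_eq' h).symm
  have hz_x : ∀ n : ℕ, (n : ℂ) • (z n * (1 - a)) = 1 - z n := by
    intro n
    have h := hzw n
    rw [mul_add, mul_one, mul_smul_comm] at h
    exact eq_sub_of_add_eq' h
  have hz_small : ∀ n : ℕ, 1 ≤ n → ‖z n * (1 - a)‖ ≤ 1 / n := by
    intro n hn
    have hnR : (0 : ℝ) < n := by exact_mod_cast hn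
    have h := congrArg norm (hz_x n)
    rw [norm_smul] at h
    have h2 : ‖((n : ℂ))‖ = (n : ℝ) := by norm_num
    rw [h2] at h
    have hb := (hbounds n).2
    rw [le_div_iff₀ hnR]
    nlinarith [norm_nonneg (z n * (1 - a))]
  have hcai : HasLeftCai (closure S) := by
    refine ⟨ℕ, inferInstance, inferInstance, inferInstance, fun n => 1 - z n, ?_, ?_, ?_⟩
    · intro n
      exact subset_closure ⟨(n : ℂ) • z n, hAsmul _ _ (hzA n), hee n⟩
    · exact fun n => (hbounds n).2
    · apply aux_left_ai S (fun n => 1 - z n) 1 (fun n => (hbounds n).2)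
      rintro s ⟨v, hvA, rfl⟩
      rw [← tendsto_sub_nhds_zero_iff]
      apply squeeze_zero_norm' ?_ (tendsto_const_div_atTop_nhds_zero_nat ‖v‖)
      · filter_upwards [eventually_ge_atTop 1] with n hn
        have heq : (1 - z n) * ((1 - a) * v) - (1 - a) * v = -(z n * (1 - a) * v) := by
          noncomm_ring
        rw [heq, norm_neg]
        calc ‖z n * (1 - a) * v‖ ≤ ‖z n * (1 - a)‖ * ‖v‖ := norm_mul_le _ _
          _ ≤ (1 / n) * ‖v‖ := mul_le_mul_of_nonneg_right (hz_small n hn) (norm_nonneg v)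
          _ = ‖v‖ / n := by ring
  refine ⟨isClosed_closure, closure_minimal hSA hAc, subset_closure hS0, ?_, ?_, ?_,
    hxnorm, hmemJ, hconv1, hcai⟩
  · intro u hu v hv
    exact map_mem_closure₂ continuous_add hu hv hSadd
  · intro c u hu
    exact map_mem_closure (continuous_const_smul c) hu fun s hs => hSsmul c s hs
  · intro u hu v hvA
    refine map_mem_closure (f := fun w => w * v) (continuous_mul_right v) hu ?_
    rintro s ⟨p, hp, rfl⟩
    exact ⟨p * v, hAmul p hp v hvA, by simp only [mul_assoc]⟩
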